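/- Let d ≥ 1 and let x be an integer with 1 ≤ x ≤ d. Let U⁻ be the centrally symmetric triangulation of the (2d+2)-gon whose interior edges are {0,0̄}, the edges {0,v} for 2 ≤ v ≤ d, and the edges {0̄,v̄} for 2 ≤ v ≤ d; and let U⁺ be the centrally symmetric triangulation whose interior edges are the diagonal {x,x̄}, the edges {0,v} for v ∈ {2,…,x} ∪ {x̄, x̄+1, …, 2d}, and the centrally symmetric copies {0̄,v̄} of the latter. Then δ(U⁺, U⁻) ≤ d − x + 1. -/
import Mathlib


namespace Cyclo

/-! Centrally symmetric triangulations of a convex polygon with `n` vertices,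
labelled clockwise by `ZMod n`. -/

/-- The vertex opposite to `x` of the polygon with `n` vertices. -/
def opp (n : ℕ) (x : ZMod n) : ZMod n := x + ((n / 2 : ℕ) : ZMod n)

/-- `e` is an edge on the polygon: a set of two distinct vertices. -/
def IsEdge (n : ℕ) (e : Finset (ZMod n)) : Prop :=
  ∃ x y : ZMod n, x ≠ y ∧ e = {x, y}

/-- `e` is a boundary edge of the polygon. -/
def IsBoundaryEdge (n : ℕ) (e : Finset (ZMod n)) : Prop :=
  ∃ x : ZMod n, e = {x, x + 1}

/-- `y` lies strictly between `x` and `z` in the clockwise cyclic order. -/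
def Sbtw (n : ℕ) (x y z : ZMod n) : Prop :=
  0 < (y - x).val ∧ (y - x).val < (z - x).val

/-- Two edges cross: exactly one endpoint of one lies strictly between the
endpoints of the other in the clockwise cyclic order. -/
def Crosses (n : ℕ) (e f : Finset (ZMod n)) : Prop :=
  ∃ a b c d : ZMod n, e = {a, b} ∧ f = {c, d} ∧ Sbtw n a c b ∧ Sbtw n b d a

/-- A triangulation: a maximal set of pairwise non-crossing edges. -/
def IsTriangulation (n : ℕ) (T : Set (Finset (ZMod n))) : Prop :=
  (∀ e ∈ T, IsEdge n e) ∧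
  (∀ e ∈ T, ∀ f ∈ T, ¬ Crosses n e f) ∧
  (∀ e, IsEdge n e → (∀ f ∈ T, ¬ Crosses n e f ∧ ¬ Crosses n f e) → e ∈ T)

/-- `T` is centrally symmetric. -/
def IsCS (n : ℕ) (T : Set (Finset (ZMod n))) : Prop :=
  ∀ x y : ZMod n, ({x, y} : Finset (ZMod n)) ∈ T →
    ({opp n x, opp n y} : Finset (ZMod n)) ∈ T

/-- `T` is a centrally symmetric triangulation. -/
def IsCST (n : ℕ) (T : Set (Finset (ZMod n))) : Prop :=
  IsTriangulation n T ∧ IsCS n T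

/-- `T'` is obtained from `T` by flipping the interior edge `{x,x'}` (and its
centrally symmetric copy `{x̄,x̄'}`): the four boundary edges of the quadrilateral
with diagonal `{x,x'}` belong to `T`, and `{x,x'}`, `{x̄,x̄'}` are replaced by the
opposite diagonals `{y,y'}`, `{ȳ,ȳ'}`. -/
def IsFlip (n : ℕ) (T T' : Set (Finset (ZMod n))) : Prop :=
  IsCST n T ∧ IsCST n T' ∧
  ∃ x x' y y' : ZMod n,
    ¬ IsBoundaryEdge n {x, x'} ∧
    ({x, x'} : Finset (ZMod n)) ∈ T ∧ ({x, y} : Finset (ZMod n)) ∈ T ∧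
    ({y, x'} : Finset (ZMod n)) ∈ T ∧ ({x', y'} : Finset (ZMod n)) ∈ T ∧
    ({y', x} : Finset (ZMod n)) ∈ T ∧
    T' = (T \ {({x, x'} : Finset (ZMod n)), {opp n x, opp n x'}}) ∪
         {({y, y'} : Finset (ZMod n)), {opp n y, opp n y'}}

/-- The flip graph (on all sets of edges; non-triangulations are isolated vertices). -/
def flipGraph (n : ℕ) : SimpleGraph (Set (Finset (ZMod n))) :=
  SimpleGraph.fromRel (IsFlip n)

/-- The flip distance of two centrally symmetric triangulations. -/
noncomputable def delta (n : ℕ) (T T' : Set (Finset (ZMod n))) : ℕ := (flipGraph n).dist T T'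

/-- The flip graph on the centrally symmetric triangulations of the `n`-gon;
it is isomorphic to the graph of the `(n/2 - 1)`-dimensional cyclohedron. -/
def flipGraphCS (n : ℕ) : SimpleGraph {T : Set (Finset (ZMod n)) // IsCST n T} :=
  SimpleGraph.fromRel fun T T' => IsFlip n T.1 T'.1

/-- `g 0, …, g k` is a geodesic from `Tm` to `Tp`. -/
def IsGeodesic (n : ℕ) (Tm Tp : Set (Finset (ZMod n)))
    (g : ℕ → Set (Finset (ZMod n))) (k : ℕ) : Prop :=
  g 0 = Tm ∧ g k = Tp ∧ (∀ i < k, (flipGraph n).Adj (g i) (g (i + 1))) ∧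
    k = delta n Tm Tp

/-- The flip transforming `T` into `T'` is incident to the boundary edge `{p,q}`:
it removes `{p,r}` or `{q,r}`, where `r` is the apex of the triangle of `T` on `{p,q}`. -/
def FlipIncident (n : ℕ) (T T' : Set (Finset (ZMod n))) (p q : ZMod n) : Prop :=
  ∃ r : ZMod n, ({p, r} : Finset (ZMod n)) ∈ T ∧ ({q, r} : Finset (ZMod n)) ∈ T ∧
    (({p, r} : Finset (ZMod n)) ∉ T' ∨ ({q, r} : Finset (ZMod n)) ∉ T')

/-- The number of flips along the path `g 0, …, g k` incident to `{p,q}`. -/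
noncomputable def incidentCount (n : ℕ) (g : ℕ → Set (Finset (ZMod n))) (k : ℕ) (p q : ZMod n) : ℕ :=
  Nat.card {i : Fin k // FlipIncident n (g i.1) (g (i.1 + 1)) p q}

/-- `x`, `y`, `z` are the vertices of a triangle of `T`. -/
def IsTriangleOf (n : ℕ) (T : Set (Finset (ZMod n))) (x y z : ZMod n) : Prop :=
  ({x, y} : Finset (ZMod n)) ∈ T ∧ ({y, z} : Finset (ZMod n)) ∈ T ∧
    ({x, z} : Finset (ZMod n)) ∈ T

/-- The three edges of the triangle with vertices `x`, `y`, `z`. -/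
def triEdges (n : ℕ) (x y z : ZMod n) : Set (Finset (ZMod n)) :=
  {{x, y}, {y, z}, {x, z}}

/-- Relabelling map for the deletion of vertex `p` from the polygon with `2e+2`
vertices: `p` is replaced by `q = p+1`, `p̄` by `q̄`, and the remaining `2e`
vertices are relabelled clockwise by `ZMod (2e)` (with `q ↦ 0`), so that
opposite vertices again differ by `e`. -/
def delV (e : ℕ) (p x : ZMod (2 * e + 2)) : ZMod (2 * e) :=
  ((if (x - p).val ≤ e + 1 then (x - p).val - 1 else (x - p).val - 2 : ℕ) : ZMod (2 * e))

/-- Deletion of vertex `p` from `T`: remove the edges `{p,p+1}` and `{p̄,p̄+1}`,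
replace `p` by `p+1` and `p̄` by `p̄+1` in every other edge, and relabel. -/
def delT (e : ℕ) (p : ZMod (2 * e + 2)) (T : Set (Finset (ZMod (2 * e + 2)))) :
    Set (Finset (ZMod (2 * e))) :=
  (fun s => s.image (delV e p)) ''
    (T \ {({p, p + 1} : Finset (ZMod (2 * e + 2))),
          {opp (2 * e + 2) p, opp (2 * e + 2) p + 1}})

/-- `DelButOne h k Tm Tp p₀ Sm Sp` holds when the pair `(Sm, Sp)` is obtained from
the pair `(Tm, Tp)` by successively deleting `k` of the `k+1` consecutive vertices
`p₀, p₀+1, …, p₀+k` (all but one of them), the deletions being performed in the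
successively smaller polygons with the surviving vertices keeping their cyclic order. -/
def DelButOne : (h k : ℕ) → Set (Finset (ZMod (2 * (h + k) + 2))) →
    Set (Finset (ZMod (2 * (h + k) + 2))) → ZMod (2 * (h + k) + 2) →
    Set (Finset (ZMod (2 * h + 2))) → Set (Finset (ZMod (2 * h + 2))) → Prop
  | _, 0, Tm, Tp, _, Sm, Sp => Sm = Tm ∧ Sp = Tp
  | h, k + 1, Tm, Tp, p₀, Sm, Sp =>
      ∃ j : ℕ, j ≤ k + 1 ∧
        DelButOne h k (delT (h + k + 1) (p₀ + (j : ZMod (2 * (h + (k + 1)) + 2))) Tm)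
          (delT (h + k + 1) (p₀ + (j : ZMod (2 * (h + (k + 1)) + 2))) Tp)
          (delV (h + k + 1) (p₀ + (j : ZMod (2 * (h + (k + 1)) + 2))) p₀) Sm Sp

/-- The set of boundary edges of the polygon with `n` vertices. -/
def boundarySet (n : ℕ) : Set (Finset (ZMod n)) := {e | IsBoundaryEdge n e}

/-- Closure of a set of edges under the central symmetry. -/
def symCl (n : ℕ) (S : Set (Finset (ZMod n))) : Set (Finset (ZMod n)) :=
  S ∪ (fun e => e.image (opp n)) '' S


/-- The interior edges (up to central symmetry) of the triangulation `A⁻`. -/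
def AminusInterior (b c d : ℕ) : Set (Finset (ZMod (2 * d + 2))) :=
  {({(0 : ZMod (2 * d + 2)), opp (2 * d + 2) 0} : Finset (ZMod (2 * d + 2)))} ∪
  {e | ∃ x : ℕ, c ≤ x ∧ x ≤ d ∧
    e = ({(0 : ZMod (2 * d + 2)), (x : ZMod (2 * d + 2))} : Finset (ZMod (2 * d + 2)))} ∪
  {e | ∃ x : ℕ, b ≤ x ∧ x ≤ c ∧
    e = ({(1 : ZMod (2 * d + 2)), (x : ZMod (2 * d + 2))} : Finset (ZMod (2 * d + 2)))} ∪
  {e | ∃ i : ℕ, 2 ≤ i ∧ i ≤ (b - 1) / 2 ∧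
    e = ({(i : ZMod (2 * d + 2)), ((b + 1 - i : ℕ) : ZMod (2 * d + 2))} : Finset (ZMod (2 * d + 2)))} ∪
  {e | ∃ i : ℕ, 2 ≤ i ∧ i ≤ b / 2 ∧
    e = ({(i : ZMod (2 * d + 2)), ((b + 2 - i : ℕ) : ZMod (2 * d + 2))} : Finset (ZMod (2 * d + 2)))}

/-- The triangulation `A⁻` of the `(2d+2)`-gon: its edges are the boundary edges,
the interior edges listed in `AminusInterior`, and their centrally symmetric copies. -/
def AminusSet (b c d : ℕ) : Set (Finset (ZMod (2 * d + 2))) :=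
  boundarySet (2 * d + 2) ∪ symCl (2 * d + 2) (AminusInterior b c d)

/-- The edges that any triangulation `A⁺` of an `(a,b,c,d)`-pair must contain
(`l = a + b - d + 2`): the edges `{1,d̄}` and `{l,c̄}`, the centrally symmetric
zigzag crossing `{0,0̄}`, and the centrally symmetric copies of all of these. -/
def AplusCore (a b c d : ℕ) : Set (Finset (ZMod (2 * d + 2))) :=
  symCl (2 * d + 2)
    ({({(1 : ZMod (2 * d + 2)), opp (2 * d + 2) (d : ZMod (2 * d + 2))} : Finset (ZMod (2 * d + 2)))} ∪
     {({((a + b - d + 2 : ℕ) : ZMod (2 * d + 2)),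
        opp (2 * d + 2) (c : ZMod (2 * d + 2))} : Finset (ZMod (2 * d + 2)))} ∪
     {e | ∃ i : ℕ, a + b - d + 2 ≤ i ∧ i ≤ c ∧
       e = ({(i : ZMod (2 * d + 2)),
             opp (2 * d + 2) ((c + (a + b - d + 2) - i : ℕ) : ZMod (2 * d + 2))} : Finset (ZMod (2 * d + 2)))} ∪
     {e | ∃ i : ℕ, a + b - d + 2 ≤ i ∧ i ≤ c - 1 ∧
       e = ({(i : ZMod (2 * d + 2)),
             opp (2 * d + 2) ((c + (a + b - d + 2) - 1 - i : ℕ) : ZMod (2 * d + 2))} : Finset (ZMod (2 * d + 2)))})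

/-- `T` is an admissible triangulation `A⁺` for an `(a,b,c,d)`-pair: a centrally
symmetric triangulation containing `AplusCore`, all of whose remaining interior
edges join a vertex of `{1,…,l}` to a vertex of `{c̄,…,d̄}` or a vertex of
`{1̄,…,l̄}` to a vertex of `{c,…,d}`, and in which every vertex of `{c̄,…,d̄}` is
joined to at least two vertices of `{1,…,l}` (so combs with at least two teeth
are attached at the vertices `c̄,…,d̄` and their opposites). -/
def IsAplus (a b c d : ℕ) (T : Set (Finset (ZMod (2 * d + 2)))) : Prop :=
  IsCST (2 * d + 2) T ∧ AplusCore a b c d ⊆ T ∧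
  (∀ e ∈ T, ¬ IsBoundaryEdge (2 * d + 2) e → e ∉ AplusCore a b c d →
    ∃ i j : ℕ, 1 ≤ i ∧ i ≤ a + b - d + 2 ∧ c ≤ j ∧ j ≤ d ∧
      (e = ({(i : ZMod (2 * d + 2)), opp (2 * d + 2) (j : ZMod (2 * d + 2))} : Finset (ZMod (2 * d + 2))) ∨
       e = ({opp (2 * d + 2) (i : ZMod (2 * d + 2)), (j : ZMod (2 * d + 2))} : Finset (ZMod (2 * d + 2))))) ∧
  (∀ j : ℕ, c ≤ j → j ≤ d →
    ∃ i₁ i₂ : ℕ, 1 ≤ i₁ ∧ i₁ ≤ a + b - d + 2 ∧ 1 ≤ i₂ ∧ i₂ ≤ a + b - d + 2 ∧ i₁ ≠ i₂ ∧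
      ({(i₁ : ZMod (2 * d + 2)), opp (2 * d + 2) (j : ZMod (2 * d + 2))} : Finset (ZMod (2 * d + 2))) ∈ T ∧
      ({(i₂ : ZMod (2 * d + 2)), opp (2 * d + 2) (j : ZMod (2 * d + 2))} : Finset (ZMod (2 * d + 2))) ∈ T)

/-- `(Am, Ap)` is an `(a,b,c,d)`-pair. -/
def IsABCDPair (a b c d : ℕ) (Am Ap : Set (Finset (ZMod (2 * d + 2)))) : Prop :=
  b < c ∧ c ≤ d ∧ d ≤ a + b ∧ 2 * a + b + 2 < 2 * d ∧
  Am = AminusSet b c d ∧ IsAplus a b c d Ap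

/-- The triangulation `U⁻`: interior edges `{0,0̄}`, `{0,x}` for `2 ≤ x ≤ d`,
and `{0̄,x̄}` for `2 ≤ x ≤ d`. -/
def UminusSet (d : ℕ) : Set (Finset (ZMod (2 * d + 2))) :=
  boundarySet (2 * d + 2) ∪ symCl (2 * d + 2)
    ({({(0 : ZMod (2 * d + 2)), opp (2 * d + 2) 0} : Finset (ZMod (2 * d + 2)))} ∪
     {e | ∃ x : ℕ, 2 ≤ x ∧ x ≤ d ∧
       e = ({(0 : ZMod (2 * d + 2)), (x : ZMod (2 * d + 2))} : Finset (ZMod (2 * d + 2)))})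

/-- The triangulation `U⁺`: interior edges the diagonal `{x,x̄}`, the edges `{0,v}`
for `v ∈ {2,…,x} ∪ {x̄,…,2d}`, and their centrally symmetric copies. -/
def UplusSet (d x : ℕ) : Set (Finset (ZMod (2 * d + 2))) :=
  boundarySet (2 * d + 2) ∪ symCl (2 * d + 2)
    ({({(x : ZMod (2 * d + 2)), opp (2 * d + 2) (x : ZMod (2 * d + 2))} : Finset (ZMod (2 * d + 2)))} ∪
     {e | ∃ v : ℕ, ((2 ≤ v ∧ v ≤ x) ∨ (x + d + 1 ≤ v ∧ v ≤ 2 * d)) ∧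
       e = ({(0 : ZMod (2 * d + 2)), (v : ZMod (2 * d + 2))} : Finset (ZMod (2 * d + 2)))})


lemma pair_eq {α : Type*} [DecidableEq α] {a b c d : α} (hab : a ≠ b)
    (h : ({a, b} : Finset α) = {c, d}) : (a = c ∧ b = d) ∨ (a = d ∧ b = c) := by
  have ha : a ∈ ({c, d} : Finset α) := h ▸ Finset.mem_insert_self a {b}
  have hb : b ∈ ({c, d} : Finset α) := h ▸ Finset.mem_insert_of_mem (Finset.mem_singleton_self b)
  simp only [Finset.mem_insert, Finset.mem_singleton] at ha hb
  rcases ha with rfl | rfl <;> rcases hb with h' | h' <;> tauto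

lemma cast_inj_of_lt {n a b : ℕ} [NeZero n] (ha : a < n) (hb : b < n)
    (h : (a : ZMod n) = b) : a = b := by
  have := congrArg ZMod.val h
  rwa [ZMod.val_natCast_of_lt ha, ZMod.val_natCast_of_lt hb] at this

lemma vsub {n a b : ℕ} [NeZero n] (ha : a < n) (hb : b < n) :
    ((b : ZMod n) - a).val = if a ≤ b then b - a else b + n - a := by
  have h1 : ((b : ZMod n) - a) = ((b + (n - a) : ℕ) : ZMod n) := by
    push_cast [Nat.cast_sub ha.le, ZMod.natCast_self]
    ring
  rw [h1, ← ZMod.natCast_mod, ZMod.val_natCast_of_lt (Nat.mod_lt _ (NeZero.pos n))]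
  split_ifs with h
  · have : b + (n - a) = (b - a) + n := by omega
    rw [this, Nat.add_mod_right, Nat.mod_eq_of_lt (by omega)]
  · rw [Nat.mod_eq_of_lt (by omega)]
    omega

lemma sbtw_iff {n a b c : ℕ} [NeZero n] (ha : a < n) (hb : b < n) (hc : c < n) :
    Sbtw n a b c ↔ ((a < b ∧ b < c) ∨ (b < c ∧ c < a) ∨ (c < a ∧ a < b)) := by
  unfold Sbtw
  rw [vsub ha hb, vsub ha hc]
  split_ifs <;> omega

/-- nat-level crossing predicate -/
def X (a b c e : ℕ) : Prop :=
  (((a < c ∧ c < b) ∨ (c < b ∧ b < a) ∨ (b < a ∧ a < c)) ∧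
   ((b < e ∧ e < a) ∨ (e < a ∧ a < b) ∨ (a < b ∧ b < e))) ∨
  (((a < e ∧ e < b) ∨ (e < b ∧ b < a) ∨ (b < a ∧ a < e)) ∧
   ((b < c ∧ c < a) ∨ (c < a ∧ a < b) ∨ (a < b ∧ b < c)))

lemma crosses_iff {n a b c e : ℕ} [NeZero n] (ha : a < n) (hb : b < n) (hc : c < n)
    (he : e < n) (hab : a ≠ b) (hce : c ≠ e) :
    Crosses n {(a : ZMod n), (b : ZMod n)} {(c : ZMod n), (e : ZMod n)} ↔ X a b c e := by
  have hab' : (a : ZMod n) ≠ (b : ZMod n) := fun h => hab (cast_inj_of_lt ha hb h)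
  have hce' : (c : ZMod n) ≠ (e : ZMod n) := fun h => hce (cast_inj_of_lt hc he h)
  constructor
  · rintro ⟨p, q, r, s, hpq, hrs, h1, h2⟩
    rcases pair_eq hab' hpq with ⟨h3, h4⟩ | ⟨h3, h4⟩ <;>
      rcases pair_eq hce' hrs with ⟨h5, h6⟩ | ⟨h5, h6⟩ <;>
      (subst h3; subst h4; subst h5; subst h6) <;>
      unfold X <;>
      [ (rw [sbtw_iff ha hc hb] at h1; rw [sbtw_iff hb he ha] at h2);
        (rw [sbtw_iff ha he hb] at h1; rw [sbtw_iff hb hc ha] at h2);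
        (rw [sbtw_iff hb hc ha] at h1; rw [sbtw_iff ha he hb] at h2);
        (rw [sbtw_iff hb he ha] at h1; rw [sbtw_iff ha hc hb] at h2)] <;>
      omega
  · intro hX
    unfold X at hX
    rcases hX with ⟨h1, h2⟩ | ⟨h1, h2⟩
    · exact ⟨a, b, c, e, rfl, rfl, (sbtw_iff ha hc hb).2 h1, (sbtw_iff hb he ha).2 h2⟩
    · exact ⟨a, b, e, c, rfl, Finset.pair_comm _ _, (sbtw_iff ha he hb).2 h1,
        (sbtw_iff hb hc ha).2 h2⟩


/-- The fan-family edge predicate: `u` is `0` or `y`; edge between `a < b`. -/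
def P (d y u a b : ℕ) : Prop :=
  (b = a + 1) ∨ (a = 0 ∧ b = 2 * d + 1) ∨
  (a = 0 ∧ ((1 ≤ b ∧ b ≤ y) ∨ (y + d + 1 ≤ b ∧ b ≤ 2 * d + 1) ∨ (u = 0 ∧ b = d + 1))) ∨
  (b = d + 1 ∧ y ≤ a ∧ a ≤ d) ∨
  (a = d + 1 ∧ d + 2 ≤ b ∧ b ≤ y + d + 1) ∨
  (a = u ∧ b = u + d + 1)

/-- pairwise non-crossing of the fan family -/
lemma nocross_core (d y u a b c e : ℕ) (hy1 : 1 ≤ y) (hy2 : y ≤ d) (hu : u = 0 ∨ u = y)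
    (hab : a < b) (hb : b < 2 * d + 2) (hce : c < e) (he : e < 2 * d + 2)
    (hP : P d y u a b) (hQ : P d y u c e) : ¬ X a b c e := by
  unfold P at hP hQ
  unfold X
  rcases hP with h | h | h | h | h | h <;> rcases hQ with g | g | g | g | g | g <;> omega

set_option maxHeartbeats 2000000 in
lemma max_core (d y u a b : ℕ) (hy1 : 1 ≤ y) (hy2 : y ≤ d) (hu : u = 0 ∨ u = y)
    (hab : a < b) (hb : b < 2 * d + 2)
    (H : ∀ c e : ℕ, c < e → e < 2 * d + 2 → P d y u c e →
      ¬ X a b c e ∧ ¬ X c e a b) :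
    P d y u a b := by
  by_cases hb1 : b = a + 1
  · left; exact hb1
  by_cases hw : a = 0 ∧ b = 2 * d + 1
  · right; left; exact hw
  rcases Nat.eq_zero_or_pos a with rfl | ha1
  · by_cases hN : (1 ≤ b ∧ b ≤ y) ∨ (y + d + 1 ≤ b ∧ b ≤ 2 * d + 1) ∨ (u = 0 ∧ b = d + 1)
    · right; right; left; exact ⟨rfl, hN⟩
    exfalso
    by_cases hbd : b ≤ d
    · have := H y (d + 1) (by omega) (by omega) (by unfold P; omega) |>.1
      unfold X at this; omega
    · rcases hu with rfl | hyu
      · have := H (d + 1) (y + d + 1) (by omega) (by omega) (by unfold P; omega) |>.1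
        unfold X at this; omega
      · have := H y (y + d + 1) (by omega) (by omega) (by unfold P; omega) |>.1
        unfold X at this; omega
  · have hay : y ≤ a := by
      by_contra h
      have := H 0 (a + 1) (by omega) (by omega) (by unfold P; omega) |>.1
      unfold X at this; omega
    have hby : b ≤ y + d + 1 := by
      by_contra h
      have := H 0 (b - 1) (by omega) (by omega) (by unfold P; omega) |>.1
      unfold X at this; omega
    by_cases had : a = d + 1
    · right; right; right; right; left; exact ⟨had, by omega, by omega⟩
    by_cases hbd : b = d + 1
    · right; right; right; left; exact ⟨hbd, hay, by omega⟩
    by_cases hda : d + 1 < a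
    · exfalso
      have := H (d + 1) (a + 1) (by omega) (by omega) (by unfold P; omega) |>.1
      unfold X at this; omega
    by_cases hbd2 : b < d + 1
    · exfalso
      have := H (a + 1) (d + 1) (by omega) (by omega) (by unfold P; omega) |>.1
      unfold X at this; omega
    rcases hu with rfl | hyu
    · exfalso
      have := H 0 (d + 1) (by omega) (by omega) (by unfold P; omega) |>.1
      unfold X at this; omega
    · by_cases hdiag : a = y ∧ b = y + d + 1
      · unfold P; omega
      exfalso
      rcases Nat.lt_or_ge y a with h' | h'
      · have := H y (d + 1) (by omega) (by omega) (by unfold P; omega) |>.1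
        unfold X at this; omega
      · have := H (d + 1) (y + d + 1) (by omega) (by omega) (by unfold P; omega) |>.1
        unfold X at this; omega

def PSet (d y u : ℕ) : Set (Finset (ZMod (2 * d + 2))) :=
  {e | ∃ a b : ℕ, a < b ∧ b < 2 * d + 2 ∧
    e = {(a : ZMod (2 * d + 2)), (b : ZMod (2 * d + 2))} ∧ P d y u a b}

lemma opp_cast (d a : ℕ) :
    opp (2 * d + 2) (a : ZMod (2 * d + 2)) =
      (((a + d + 1) % (2 * d + 2) : ℕ) : ZMod (2 * d + 2)) := by
  unfold opp
  have h2 : (2 * d + 2) / 2 = d + 1 := by omega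
  rw [h2, ZMod.natCast_mod]
  push_cast
  ring

lemma mod_shift (d a : ℕ) (ha : a < 2 * d + 2) :
    (a + d + 1) % (2 * d + 2) = if a ≤ d then a + d + 1 else a - (d + 1) := by
  split_ifs with h
  · exact Nat.mod_eq_of_lt (by omega)
  · have h1 : a + d + 1 = (a - (d + 1)) + (2 * d + 2) := by omega
    rw [h1, Nat.add_mod_right, Nat.mod_eq_of_lt (by omega)]

lemma P_shift (d y u a b a2 b2 : ℕ) (hy1 : 1 ≤ y) (hy2 : y ≤ d) (hu : u = 0 ∨ u = y)
    (ha2 : a2 = if a ≤ d then a + d + 1 else a - (d + 1))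
    (hb2 : b2 = if b ≤ d then b + d + 1 else b - (d + 1))
    (hab : a < b) (hb : b < 2 * d + 2) (hP : P d y u a b) :
    (a2 < b2 ∧ b2 < 2 * d + 2 ∧ P d y u a2 b2) ∨
    (b2 < a2 ∧ a2 < 2 * d + 2 ∧ P d y u b2 a2) := by
  subst ha2 hb2
  rcases hP with h | h | h | h | h | h
  · rcases le_or_gt b d with h2 | h2
    · rw [if_pos (show a ≤ d by omega), if_pos h2]
      exact Or.inl ⟨by omega, by omega, Or.inl (by omega)⟩
    rcases le_or_gt a d with h1 | h1
    · rw [if_pos h1, if_neg (by omega)]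
      exact Or.inr ⟨by omega, by omega, Or.inr (Or.inl ⟨by omega, by omega⟩)⟩
    · rw [if_neg (by omega), if_neg (by omega)]
      exact Or.inl ⟨by omega, by omega, Or.inl (by omega)⟩
  · rw [if_pos (by omega), if_neg (by omega)]
    exact Or.inr ⟨by omega, by omega, Or.inl (by omega)⟩
  · obtain ⟨rfl, h3⟩ := h
    rcases h3 with ⟨h4, h5⟩ | ⟨h4, h5⟩ | ⟨h4, h5⟩
    · rw [if_pos (by omega), if_pos (by omega)]
      exact Or.inl ⟨by omega, by omega,
        Or.inr (Or.inr (Or.inr (Or.inr (Or.inl ⟨by omega, by omega, by omega⟩))))⟩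
    · rw [if_pos (by omega), if_neg (by omega)]
      exact Or.inr ⟨by omega, by omega,
        Or.inr (Or.inr (Or.inr (Or.inl ⟨by omega, by omega, by omega⟩)))⟩
    · rw [if_pos (by omega), if_neg (by omega)]
      exact Or.inr ⟨by omega, by omega,
        Or.inr (Or.inr (Or.inr (Or.inr (Or.inr ⟨by omega, by omega⟩))))⟩
  · rw [if_pos (by omega), if_neg (by omega)]
    exact Or.inr ⟨by omega, by omega,
      Or.inr (Or.inr (Or.inl ⟨by omega, Or.inr (Or.inl ⟨by omega, by omega⟩)⟩))⟩
  · rw [if_neg (by omega), if_neg (by omega)]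
    exact Or.inl ⟨by omega, by omega,
      Or.inr (Or.inr (Or.inl ⟨by omega, Or.inl ⟨by omega, by omega⟩⟩))⟩
  · rcases hu with rfl | hyu
    · rw [if_pos (by omega), if_neg (by omega)]
      exact Or.inr ⟨by omega, by omega,
        Or.inr (Or.inr (Or.inr (Or.inr (Or.inr ⟨by omega, by omega⟩))))⟩
    · rw [if_pos (by omega), if_neg (by omega)]
      exact Or.inr ⟨by omega, by omega,
        Or.inr (Or.inr (Or.inr (Or.inr (Or.inr ⟨by omega, by omega⟩))))⟩

set_option maxHeartbeats 2000000 in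
lemma isCST_PSet (d y u : ℕ) (hd : 1 ≤ d) (hy1 : 1 ≤ y) (hy2 : y ≤ d)
    (hu : u = 0 ∨ u = y) : IsCST (2 * d + 2) (PSet d y u) := by
  haveI : NeZero (2 * d + 2) := ⟨by omega⟩
  constructor
  · refine ⟨?_, ?_, ?_⟩
    · rintro e ⟨a, b, hab, hb, rfl, hP⟩
      exact ⟨_, _, fun h => (Nat.lt_irrefl a) (by
        have := cast_inj_of_lt (n := 2 * d + 2) (by omega) (by omega) h; omega), rfl⟩
    · rintro e ⟨a, b, hab, hb, rfl, hP⟩ f ⟨c, e', hce, he', rfl, hQ⟩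
      rw [crosses_iff (by omega) (by omega) (by omega) (by omega) (by omega) (by omega)]
      exact nocross_core d y u a b c e' hy1 hy2 hu hab hb hce he' hP hQ
    · rintro e ⟨z, w, hzw, rfl⟩ H
      have hz := ZMod.val_lt z
      have hw := ZMod.val_lt w
      have hzv : z = ((z.val : ℕ) : ZMod (2 * d + 2)) := (ZMod.natCast_rightInverse z).symm
      have hwv : w = ((w.val : ℕ) : ZMod (2 * d + 2)) := (ZMod.natCast_rightInverse w).symm
      have hne : z.val ≠ w.val := fun h => hzw (by rw [hzv, hwv, h])
      -- sort
      obtain ⟨a, b, hab, hb, hrep⟩ :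
          ∃ a b : ℕ, a < b ∧ b < 2 * d + 2 ∧
            ({z, w} : Finset (ZMod (2 * d + 2))) = {(a : ZMod (2 * d + 2)), (b : ZMod (2 * d + 2))} := by
        rcases Nat.lt_or_ge z.val w.val with h | h
        · exact ⟨z.val, w.val, h, hw, by rw [← hzv, ← hwv]⟩
        · exact ⟨w.val, z.val, by omega, hz, by rw [← hzv, ← hwv, Finset.pair_comm]⟩
      rw [hrep]
      refine ⟨a, b, hab, hb, rfl, ?_⟩
      refine max_core d y u a b hy1 hy2 hu hab hb ?_
      intro c e' hce he' hQ
      have hmem : ({(c : ZMod (2 * d + 2)), (e' : ZMod (2 * d + 2))} : Finset (ZMod (2 * d + 2)))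
          ∈ PSet d y u := ⟨c, e', hce, he', rfl, hQ⟩
      obtain ⟨h1, h2⟩ := H _ hmem
      rw [hrep] at h1 h2
      rw [crosses_iff (by omega) (by omega) (by omega) (by omega) (by omega) (by omega)] at h1
      rw [crosses_iff (by omega) (by omega) (by omega) (by omega) (by omega) (by omega)] at h2
      exact ⟨h1, h2⟩
  · -- central symmetry
    intro z w hzw
    obtain ⟨a, b, hab, hb, he, hP⟩ := hzw
    have hane : (a : ZMod (2 * d + 2)) ≠ (b : ZMod (2 * d + 2)) := fun h => (Nat.lt_irrefl a) (by
      have := cast_inj_of_lt (n := 2 * d + 2) (by omega) (by omega) h; omega)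
    have himg : ({opp (2 * d + 2) z, opp (2 * d + 2) w} : Finset (ZMod (2 * d + 2))) =
        {opp (2 * d + 2) (a : ZMod (2 * d + 2)), opp (2 * d + 2) (b : ZMod (2 * d + 2))} := by
      rcases pair_eq hane he.symm with ⟨h1, h2⟩ | ⟨h1, h2⟩
      · rw [h1, h2]
      · rw [h1, h2, Finset.pair_comm]
    rw [himg, opp_cast, opp_cast, mod_shift d a (by omega), mod_shift d b (by omega)]
    rcases P_shift d y u a b _ _ hy1 hy2 hu rfl rfl hab hb hP with ⟨h1, h2, h3⟩ | ⟨h1, h2, h3⟩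
    · exact ⟨_, _, h1, h2, rfl, h3⟩
    · exact ⟨_, _, h1, h2, Finset.pair_comm _ _, h3⟩

lemma P_step_forward (d y a b : ℕ) (hy1 : 1 ≤ y) (hyd : y < d) (hab : a < b) (hb : b < 2*d+2)
    (hP : P d (y+1) 0 a b) (h1 : ¬(a = d+1 ∧ b = y+d+2)) (h2 : ¬(a = 0 ∧ b = y+1)) :
    P d y 0 a b ∧ ¬(a = 0 ∧ b = y+d+1) ∧ ¬(a = y ∧ b = d+1) := by
  unfold P at hP ⊢
  omega

lemma P_step_back (d y a b : ℕ) (hy1 : 1 ≤ y) (hyd : y < d) (hab : a < b) (hb : b < 2*d+2)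
    (hP : P d y 0 a b) (h1 : ¬(a = 0 ∧ b = y+d+1)) (h2 : ¬(a = y ∧ b = d+1)) :
    P d (y+1) 0 a b := by
  unfold P at hP ⊢
  omega

lemma P_flip0_forward (d x a b : ℕ) (hx1 : 1 ≤ x) (hxd : x ≤ d) (hab : a < b) (hb : b < 2*d+2)
    (hP : P d x 0 a b) (h1 : ¬(a = 0 ∧ b = d+1)) :
    P d x x a b ∧ ¬(a = x ∧ b = x+d+1) := by
  unfold P at hP ⊢
  omega

lemma P_flip0_back (d x a b : ℕ) (hx1 : 1 ≤ x) (hxd : x ≤ d) (hab : a < b) (hb : b < 2*d+2)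
    (hP : P d x x a b) (h1 : ¬(a = x ∧ b = x+d+1)) :
    P d x 0 a b := by
  unfold P at hP ⊢
  omega

lemma cast_add_one (d a : ℕ) :
    ((a : ZMod (2 * d + 2)) + 1) = ((a + 1 : ℕ) : ZMod (2 * d + 2)) := by
  push_cast; ring

/-- extract a sorted representative from a pair of naturals. -/
lemma sort_pair (d : ℕ) (p q : ℕ) (hp : p < 2*d+2) (hq : q < 2*d+2) (hpq : p ≠ q) :
    ∃ a b : ℕ, a < b ∧ b < 2*d+2 ∧
      ({(p : ZMod (2*d+2)), (q : ZMod (2*d+2))} : Finset (ZMod (2*d+2))) =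
        {(a : ZMod (2*d+2)), (b : ZMod (2*d+2))} ∧
      ((a = p ∧ b = q) ∨ (a = q ∧ b = p)) := by
  rcases Nat.lt_or_ge p q with h | h
  · exact ⟨p, q, h, hq, rfl, Or.inl ⟨rfl, rfl⟩⟩
  · exact ⟨q, p, by omega, hp, Finset.pair_comm _ _, Or.inr ⟨rfl, rfl⟩⟩

/-- decode a pair equality into nat equalities, given sortedness on both sides -/
lemma pair_cast_eq (d : ℕ) (a b p q : ℕ) (hab : a < b) (hb : b < 2*d+2)
    (hpq : p < q) (hq : q < 2*d+2)
    (h : ({(a : ZMod (2*d+2)), (b : ZMod (2*d+2))} : Finset (ZMod (2*d+2))) =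
      {(p : ZMod (2*d+2)), (q : ZMod (2*d+2))}) : a = p ∧ b = q := by
  haveI : NeZero (2*d+2) := ⟨by omega⟩
  have hane : (a : ZMod (2*d+2)) ≠ (b : ZMod (2*d+2)) := fun hh => by
    have := cast_inj_of_lt (n := 2*d+2) (by omega) (by omega) hh; omega
  rcases pair_eq hane h with ⟨h1, h2⟩ | ⟨h1, h2⟩
  · exact ⟨cast_inj_of_lt (by omega) (by omega) h1, cast_inj_of_lt (by omega) (by omega) h2⟩
  · have e1 := cast_inj_of_lt (n := 2*d+2) (by omega) (by omega) h1
    have e2 := cast_inj_of_lt (n := 2*d+2) (by omega) (by omega) h2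
    omega

lemma boundary_iff (d : ℕ) (e : Finset (ZMod (2*d+2))) :
    e ∈ boundarySet (2*d+2) ↔ ∃ a b : ℕ, a < b ∧ b < 2*d+2 ∧
      e = {(a : ZMod (2*d+2)), (b : ZMod (2*d+2))} ∧
      (b = a + 1 ∨ (a = 0 ∧ b = 2*d+1)) := by
  haveI : NeZero (2*d+2) := ⟨by omega⟩
  constructor
  · rintro ⟨t, rfl⟩
    have ht := ZMod.val_lt t
    have htv : t = ((t.val : ℕ) : ZMod (2*d+2)) := (ZMod.natCast_rightInverse t).symm
    rcases Nat.lt_or_ge t.val (2*d+1) with h | h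
    · refine ⟨t.val, t.val + 1, by omega, by omega, ?_, Or.inl rfl⟩
      rw [← cast_add_one, ← htv]
    · refine ⟨0, 2*d+1, by omega, by omega, ?_, Or.inr ⟨rfl, rfl⟩⟩
      have h1 : t = ((2*d+1 : ℕ) : ZMod (2*d+2)) := by
        rw [htv]; congr 1; omega
      have h2 : ((2*d+1 : ℕ) : ZMod (2*d+2)) + 1 = ((0 : ℕ) : ZMod (2*d+2)) := by
        rw [cast_add_one]
        have : ((2*d+1+1 : ℕ) : ZMod (2*d+2)) = ((2*d+2 : ℕ) : ZMod (2*d+2)) := by norm_num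
        rw [this]
        exact_mod_cast ZMod.natCast_self (2*d+2)
      rw [h1, h2, Finset.pair_comm]
  · rintro ⟨a, b, hab, hb, rfl, h | ⟨rfl, rfl⟩⟩
    · exact ⟨(a : ZMod (2*d+2)), by rw [cast_add_one, h]⟩
    · refine ⟨((2*d+1 : ℕ) : ZMod (2*d+2)), ?_⟩
      have h2 : ((2*d+1 : ℕ) : ZMod (2*d+2)) + 1 = ((0 : ℕ) : ZMod (2*d+2)) := by
        rw [cast_add_one]
        have : ((2*d+1+1 : ℕ) : ZMod (2*d+2)) = ((2*d+2 : ℕ) : ZMod (2*d+2)) := by norm_num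
        rw [this]
        exact_mod_cast ZMod.natCast_self (2*d+2)
      rw [h2, Finset.pair_comm]

lemma image_pair (d : ℕ) (p q : ZMod (2*d+2)) :
    ({p, q} : Finset (ZMod (2*d+2))).image (opp (2*d+2)) = {opp (2*d+2) p, opp (2*d+2) q} := by
  simp [Finset.image_insert]

lemma opp_lo (d a : ℕ) (h : a ≤ d) :
    opp (2*d+2) ((a : ℕ) : ZMod (2*d+2)) = ((a + d + 1 : ℕ) : ZMod (2*d+2)) := by
  rw [opp_cast, mod_shift d a (by omega), if_pos h]

lemma opp_hi (d a : ℕ) (h1 : d < a) (h2 : a < 2*d+2) :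
    opp (2*d+2) ((a : ℕ) : ZMod (2*d+2)) = ((a - (d+1) : ℕ) : ZMod (2*d+2)) := by
  rw [opp_cast, mod_shift d a h2, if_neg (by omega)]

lemma opp_zero (d : ℕ) :
    opp (2*d+2) ((0 : ℕ) : ZMod (2*d+2)) = ((d+1 : ℕ) : ZMod (2*d+2)) := by
  rw [opp_lo d 0 (by omega)]
  norm_num

lemma UminusSet_eq (d : ℕ) (hd : 1 ≤ d) : UminusSet d = PSet d d 0 := by
  haveI : NeZero (2*d+2) := ⟨by omega⟩
  have hz : ((0 : ZMod (2*d+2))) = ((0 : ℕ) : ZMod (2*d+2)) := by norm_num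
  ext e
  simp only [UminusSet, symCl, Set.mem_union, Set.mem_singleton_iff, Set.mem_setOf_eq,
    Set.mem_image]
  constructor
  · rintro (hb | ((h | ⟨v, hv1, hv2, rfl⟩) | ⟨s, (h | ⟨v, hv1, hv2, rfl⟩), rfl⟩))
    · rw [boundary_iff] at hb
      obtain ⟨a, b, hab, hb2, rfl, hcl⟩ := hb
      exact ⟨a, b, hab, hb2, rfl, hcl.imp id Or.inl⟩
    · subst h
      rw [hz, opp_zero]
      exact ⟨0, d+1, by omega, by omega, rfl, by unfold P; omega⟩
    · exact ⟨0, v, by omega, by omega, by rw [hz], by unfold P; omega⟩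
    · subst h
      rw [hz, opp_zero, image_pair, opp_zero, opp_hi d (d+1) (by omega) (by omega)]
      refine ⟨0, d+1, by omega, by omega, ?_, by unfold P; omega⟩
      have h9 : ((d+1-(d+1) : ℕ) : ZMod (2*d+2)) = ((0:ℕ) : ZMod (2*d+2)) := by congr 1; omega
      rw [h9, Finset.pair_comm]
    · rw [hz, image_pair, opp_zero, opp_lo d v (by omega)]
      exact ⟨d+1, v+d+1, by omega, by omega, rfl, by unfold P; omega⟩
  · rintro ⟨a, b, hab, hb, rfl, hP⟩
    rcases hP with h | h | ⟨ha0, h⟩ | ⟨hb1, h2, h3⟩ | ⟨ha1, h2, h3⟩ | ⟨ha0, hb1⟩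
    · exact Or.inl ((boundary_iff d _).2 ⟨a, b, hab, hb, rfl, Or.inl h⟩)
    · exact Or.inl ((boundary_iff d _).2 ⟨a, b, hab, hb, rfl, Or.inr h⟩)
    · subst ha0
      rcases h with ⟨h1, h2⟩ | ⟨h1, h2⟩ | ⟨_, h2⟩
      · by_cases hb1 : b = 1
        · exact Or.inl ((boundary_iff d _).2 ⟨0, b, hab, hb, rfl, Or.inl (by omega)⟩)
        · exact Or.inr (Or.inl (Or.inr ⟨b, by omega, by omega, by rw [hz]⟩))
      · -- b = 2d+1 forced
        exact Or.inl ((boundary_iff d _).2 ⟨0, b, hab, hb, rfl, Or.inr ⟨rfl, by omega⟩⟩)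
      · subst h2
        refine Or.inr (Or.inl (Or.inl ?_))
        rw [hz, opp_zero]
    · -- b = d+1, a = d (since y = d): boundary
      exact Or.inl ((boundary_iff d _).2 ⟨a, b, hab, hb, rfl, Or.inl (by omega)⟩)
    · -- a = d+1, d+2 ≤ b ≤ 2d+1
      subst ha1
      by_cases hbd : b = d+2
      · exact Or.inl ((boundary_iff d _).2 ⟨d+1, b, hab, hb, rfl, Or.inl (by omega)⟩)
      · refine Or.inr (Or.inr ⟨{(0 : ZMod (2*d+2)), ((b-(d+1) : ℕ) : ZMod (2*d+2))},
          Or.inr ⟨b-(d+1), by omega, by omega, by rw [hz]⟩, ?_⟩)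
        rw [hz, image_pair, opp_zero, opp_lo d (b-(d+1)) (by omega)]
        have h9 : ((b-(d+1)+d+1 : ℕ) : ZMod (2*d+2)) = ((b : ℕ) : ZMod (2*d+2)) := by congr 1; omega
        rw [h9]
    · -- diag (0, d+1)
      subst ha0; subst hb1
      refine Or.inr (Or.inl (Or.inl ?_))
      rw [hz, opp_zero]
      norm_num

lemma UplusSet_eq (d x : ℕ) (hd : 1 ≤ d) (hx1 : 1 ≤ x) (hx2 : x ≤ d) :
    UplusSet d x = PSet d x x := by
  haveI : NeZero (2*d+2) := ⟨by omega⟩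
  have hz : ((0 : ZMod (2*d+2))) = ((0 : ℕ) : ZMod (2*d+2)) := by norm_num
  ext e
  simp only [UplusSet, symCl, Set.mem_union, Set.mem_singleton_iff, Set.mem_setOf_eq,
    Set.mem_image]
  constructor
  · rintro (hb | ((h | ⟨v, hv, rfl⟩) | ⟨s, (h | ⟨v, hv, rfl⟩), rfl⟩))
    · rw [boundary_iff] at hb
      obtain ⟨a, b, hab, hb2, rfl, hcl⟩ := hb
      exact ⟨a, b, hab, hb2, rfl, hcl.imp id Or.inl⟩
    · subst h
      rw [opp_lo d x hx2]
      exact ⟨x, x+d+1, by omega, by omega, rfl,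
        Or.inr (Or.inr (Or.inr (Or.inr (Or.inr ⟨rfl, rfl⟩))))⟩
    · refine ⟨0, v, by omega, by omega, by rw [hz], by unfold P; omega⟩
    · subst h
      rw [opp_lo d x hx2, image_pair, opp_lo d x hx2, opp_hi d (x+d+1) (by omega) (by omega)]
      refine ⟨x, x+d+1, by omega, by omega, ?_,
        Or.inr (Or.inr (Or.inr (Or.inr (Or.inr ⟨rfl, rfl⟩))))⟩
      have h9 : ((x+d+1-(d+1) : ℕ) : ZMod (2*d+2)) = ((x : ℕ) : ZMod (2*d+2)) := by congr 1; omega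
      rw [h9, Finset.pair_comm]
    · rcases hv with ⟨h1, h2⟩ | ⟨h1, h2⟩
      · rw [hz, image_pair, opp_zero, opp_lo d v (by omega)]
        exact ⟨d+1, v+d+1, by omega, by omega, rfl, by unfold P; omega⟩
      · rw [hz, image_pair, opp_zero, opp_hi d v (by omega) (by omega)]
        exact ⟨v-(d+1), d+1, by omega, by omega, Finset.pair_comm _ _, by unfold P; omega⟩
  · rintro ⟨a, b, hab, hb, rfl, hP⟩
    rcases hP with h | h | ⟨ha0, h⟩ | ⟨hb1, h2, h3⟩ | ⟨ha1, h2, h3⟩ | ⟨ha0, hb1⟩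
    · exact Or.inl ((boundary_iff d _).2 ⟨a, b, hab, hb, rfl, Or.inl h⟩)
    · exact Or.inl ((boundary_iff d _).2 ⟨a, b, hab, hb, rfl, Or.inr h⟩)
    · subst ha0
      rcases h with ⟨h1, h2⟩ | ⟨h1, h2⟩ | ⟨hu0, h2⟩
      · by_cases hb1 : b = 1
        · exact Or.inl ((boundary_iff d _).2 ⟨0, b, hab, hb, rfl, Or.inl (by omega)⟩)
        · exact Or.inr (Or.inl (Or.inr ⟨b, Or.inl ⟨by omega, h2⟩, by rw [hz]⟩))
      · by_cases hb1 : b = 2*d+1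
        · exact Or.inl ((boundary_iff d _).2 ⟨0, b, hab, hb, rfl, Or.inr ⟨rfl, hb1⟩⟩)
        · exact Or.inr (Or.inl (Or.inr ⟨b, Or.inr ⟨by omega, by omega⟩, by rw [hz]⟩))
      · omega
    · -- b = d+1, x ≤ a ≤ d
      subst hb1
      by_cases had : a = d
      · exact Or.inl ((boundary_iff d _).2 ⟨a, d+1, hab, hb, rfl, Or.inl (by omega)⟩)
      · refine Or.inr (Or.inr ⟨{(0 : ZMod (2*d+2)), ((a+d+1 : ℕ) : ZMod (2*d+2))},
          Or.inr ⟨a+d+1, Or.inr ⟨by omega, by omega⟩, by rw [hz]⟩, ?_⟩)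
        rw [hz, image_pair, opp_zero, opp_hi d (a+d+1) (by omega) (by omega)]
        have h9 : ((a+d+1-(d+1) : ℕ) : ZMod (2*d+2)) = ((a : ℕ) : ZMod (2*d+2)) := by congr 1; omega
        rw [h9, Finset.pair_comm]
    · -- a = d+1, d+2 ≤ b ≤ x+d+1
      subst ha1
      by_cases hbd : b = d+2
      · exact Or.inl ((boundary_iff d _).2 ⟨d+1, b, hab, hb, rfl, Or.inl (by omega)⟩)
      · refine Or.inr (Or.inr ⟨{(0 : ZMod (2*d+2)), ((b-(d+1) : ℕ) : ZMod (2*d+2))},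
          Or.inr ⟨b-(d+1), Or.inl ⟨by omega, by omega⟩, by rw [hz]⟩, ?_⟩)
        rw [hz, image_pair, opp_zero, opp_lo d (b-(d+1)) (by omega)]
        have h9 : ((b-(d+1)+d+1 : ℕ) : ZMod (2*d+2)) = ((b : ℕ) : ZMod (2*d+2)) := by congr 1; omega
        rw [h9]
    · -- diag
      refine Or.inr (Or.inl (Or.inl ?_))
      rw [opp_lo d x hx2, ha0, hb1]

lemma memP (d y u a b : ℕ) (hab : a < b) (hb : b < 2*d+2) (h : P d y u a b) :
    ({((a:ℕ) : ZMod (2*d+2)), ((b:ℕ) : ZMod (2*d+2))} : Finset (ZMod (2*d+2))) ∈ PSet d y u :=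
  ⟨a, b, hab, hb, rfl, h⟩

lemma memP' (d y u a b : ℕ) (hab : a < b) (hb : b < 2*d+2) (h : P d y u a b) :
    ({((b:ℕ) : ZMod (2*d+2)), ((a:ℕ) : ZMod (2*d+2))} : Finset (ZMod (2*d+2))) ∈ PSet d y u :=
  ⟨a, b, hab, hb, Finset.pair_comm _ _, h⟩

lemma notMemP (d y u p q : ℕ) (hpq : p < q) (hq : q < 2*d+2) (h : ¬ P d y u p q) :
    ({((p:ℕ) : ZMod (2*d+2)), ((q:ℕ) : ZMod (2*d+2))} : Finset (ZMod (2*d+2))) ∉ PSet d y u := by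
  rintro ⟨a, b, hab, hb, heq, hP⟩
  obtain ⟨rfl, rfl⟩ := pair_cast_eq d p q a b hpq hq hab hb heq
  exact h hP

lemma not_boundary (d a b : ℕ) (hab : a < b) (hb : b < 2*d+2) (h1 : b ≠ a+1)
    (h2 : ¬(a = 0 ∧ b = 2*d+1)) :
    ¬ IsBoundaryEdge (2*d+2) {((a:ℕ) : ZMod (2*d+2)), ((b:ℕ) : ZMod (2*d+2))} := by
  intro hbd
  obtain ⟨p, q, hpq, hq, heq, hcl⟩ := (boundary_iff d _).1 hbd
  obtain ⟨rfl, rfl⟩ := pair_cast_eq d a b p q hab hb hpq hq heq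
  omega

lemma flip_step_eq (d y : ℕ) (hd : 1 ≤ d) (hy1 : 1 ≤ y) (hyd : y < d) :
    PSet d (y+1) 0 = (PSet d y 0 \
      {({((0:ℕ) : ZMod (2*d+2)), ((y+d+1 : ℕ) : ZMod (2*d+2))} : Finset (ZMod (2*d+2))),
       ({((d+1 : ℕ) : ZMod (2*d+2)), ((y:ℕ) : ZMod (2*d+2))} : Finset (ZMod (2*d+2)))}) ∪
      {({((y+d+2 : ℕ) : ZMod (2*d+2)), ((d+1 : ℕ) : ZMod (2*d+2))} : Finset (ZMod (2*d+2))),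
       ({((y+1 : ℕ) : ZMod (2*d+2)), ((0:ℕ) : ZMod (2*d+2))} : Finset (ZMod (2*d+2)))} := by
  haveI : NeZero (2*d+2) := ⟨by omega⟩
  ext e
  simp only [Set.mem_union, Set.mem_diff, Set.mem_insert_iff, Set.mem_singleton_iff, not_or]
  constructor
  · rintro ⟨a, b, hab, hb, rfl, hP⟩
    by_cases h1 : a = d+1 ∧ b = y+d+2
    · right; left
      rw [h1.1, h1.2]
      exact Finset.pair_comm _ _
    by_cases h2 : a = 0 ∧ b = y+1
    · right; right
      rw [h2.1, h2.2]
      exact Finset.pair_comm _ _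
    left
    obtain ⟨hP', hn1, hn2⟩ := P_step_forward d y a b hy1 hyd hab hb hP h1 h2
    refine ⟨memP d y 0 a b hab hb hP', ?_, ?_⟩
    · intro hc
      exact hn1 (pair_cast_eq d a b 0 (y+d+1) hab hb (by omega) (by omega) hc)
    · intro hc
      exact hn2 (pair_cast_eq d a b y (d+1) hab hb (by omega) (by omega)
        (hc.trans (Finset.pair_comm _ _)))
  · rintro (⟨⟨a, b, hab, hb, rfl, hP⟩, hn1, hn2⟩ | h | h)
    · refine memP d (y+1) 0 a b hab hb (P_step_back d y a b hy1 hyd hab hb hP ?_ ?_)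
      · rintro ⟨rfl, rfl⟩; exact hn1 rfl
      · rintro ⟨rfl, rfl⟩; exact hn2 (Finset.pair_comm _ _)
    · rw [h]; exact memP' d (y+1) 0 (d+1) (y+d+2) (by omega) (by omega) (by unfold P; omega)
    · rw [h]; exact memP' d (y+1) 0 0 (y+1) (by omega) (by omega) (by unfold P; omega)

lemma flip0_eq (d x : ℕ) (hd : 1 ≤ d) (hx1 : 1 ≤ x) (hx2 : x ≤ d) :
    PSet d x 0 = (PSet d x x \
      {({((x:ℕ) : ZMod (2*d+2)), ((x+d+1 : ℕ) : ZMod (2*d+2))} : Finset (ZMod (2*d+2))),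
       ({((x+d+1 : ℕ) : ZMod (2*d+2)), ((x:ℕ) : ZMod (2*d+2))} : Finset (ZMod (2*d+2)))}) ∪
      {({((0:ℕ) : ZMod (2*d+2)), ((d+1 : ℕ) : ZMod (2*d+2))} : Finset (ZMod (2*d+2))),
       ({((d+1 : ℕ) : ZMod (2*d+2)), ((0:ℕ) : ZMod (2*d+2))} : Finset (ZMod (2*d+2)))} := by
  haveI : NeZero (2*d+2) := ⟨by omega⟩
  ext e
  simp only [Set.mem_union, Set.mem_diff, Set.mem_insert_iff, Set.mem_singleton_iff, not_or]
  constructor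
  · rintro ⟨a, b, hab, hb, rfl, hP⟩
    by_cases h1 : a = 0 ∧ b = d+1
    · right; left
      rw [h1.1, h1.2]
    left
    obtain ⟨hP', hn1⟩ := P_flip0_forward d x a b hx1 hx2 hab hb hP h1
    refine ⟨memP d x x a b hab hb hP', ?_, ?_⟩
    · intro hc
      exact hn1 (pair_cast_eq d a b x (x+d+1) hab hb (by omega) (by omega) hc)
    · intro hc
      exact hn1 (pair_cast_eq d a b x (x+d+1) hab hb (by omega) (by omega)
        (hc.trans (Finset.pair_comm _ _)))
  · rintro (⟨⟨a, b, hab, hb, rfl, hP⟩, hn1, _⟩ | h | h)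
    · refine memP d x 0 a b hab hb (P_flip0_back d x a b hx1 hx2 hab hb hP ?_)
      rintro ⟨rfl, rfl⟩; exact hn1 rfl
    · rw [h]; exact memP d x 0 0 (d+1) (by omega) (by omega) (by unfold P; omega)
    · rw [h]; exact memP' d x 0 0 (d+1) (by omega) (by omega) (by unfold P; omega)

lemma opp_cast_eq (d p q : ℕ) (h : p + d + 1 = q ∨ p + d + 1 = q + (2*d+2))
    (hq : q < 2*d+2) :
    opp (2*d+2) ((p:ℕ) : ZMod (2*d+2)) = ((q:ℕ) : ZMod (2*d+2)) := by
  rw [opp_cast]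
  congr 1
  rcases h with h | h
  · rw [h]; exact Nat.mod_eq_of_lt hq
  · rw [h, Nat.add_mod_right]; exact Nat.mod_eq_of_lt hq

lemma isFlip_step (d y : ℕ) (hd : 1 ≤ d) (hy1 : 1 ≤ y) (hyd : y < d) :
    IsFlip (2*d+2) (PSet d y 0) (PSet d (y+1) 0) := by
  haveI : NeZero (2*d+2) := ⟨by omega⟩
  refine ⟨isCST_PSet d y 0 hd hy1 (by omega) (Or.inl rfl),
    isCST_PSet d (y+1) 0 hd (by omega) (by omega) (Or.inl rfl),
    ((0:ℕ) : ZMod (2*d+2)), ((y+d+1 : ℕ) : ZMod (2*d+2)),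
    ((y+d+2 : ℕ) : ZMod (2*d+2)), ((d+1 : ℕ) : ZMod (2*d+2)), ?_, ?_, ?_, ?_, ?_, ?_, ?_⟩
  · exact not_boundary d 0 (y+d+1) (by omega) (by omega) (by omega) (by omega)
  · exact memP d y 0 0 (y+d+1) (by omega) (by omega) (by unfold P; omega)
  · exact memP d y 0 0 (y+d+2) (by omega) (by omega) (by unfold P; omega)
  · exact memP' d y 0 (y+d+1) (y+d+2) (by omega) (by omega) (by unfold P; omega)
  · exact memP' d y 0 (d+1) (y+d+1) (by omega) (by omega) (by unfold P; omega)
  · exact memP' d y 0 0 (d+1) (by omega) (by omega) (by unfold P; omega)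
  · rw [opp_cast_eq d 0 (d+1) (by omega) (by omega),
      opp_cast_eq d (y+d+1) y (by omega) (by omega),
      opp_cast_eq d (y+d+2) (y+1) (by omega) (by omega),
      opp_cast_eq d (d+1) 0 (by omega) (by omega)]
    exact flip_step_eq d y hd hy1 hyd

lemma isFlip0 (d x : ℕ) (hd : 1 ≤ d) (hx1 : 1 ≤ x) (hx2 : x ≤ d) :
    IsFlip (2*d+2) (PSet d x x) (PSet d x 0) := by
  haveI : NeZero (2*d+2) := ⟨by omega⟩
  refine ⟨isCST_PSet d x x hd hx1 hx2 (Or.inr rfl),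
    isCST_PSet d x 0 hd hx1 hx2 (Or.inl rfl),
    ((x:ℕ) : ZMod (2*d+2)), ((x+d+1 : ℕ) : ZMod (2*d+2)),
    ((0:ℕ) : ZMod (2*d+2)), ((d+1 : ℕ) : ZMod (2*d+2)), ?_, ?_, ?_, ?_, ?_, ?_, ?_⟩
  · exact not_boundary d x (x+d+1) (by omega) (by omega) (by omega) (by omega)
  · exact memP d x x x (x+d+1) (by omega) (by omega) (by unfold P; omega)
  · exact memP' d x x 0 x (by omega) (by omega) (by unfold P; omega)
  · exact memP d x x 0 (x+d+1) (by omega) (by omega) (by unfold P; omega)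
  · exact memP' d x x (d+1) (x+d+1) (by omega) (by omega) (by unfold P; omega)
  · exact memP' d x x x (d+1) (by omega) (by omega) (by unfold P; omega)
  · rw [opp_cast_eq d x (x+d+1) (by omega) (by omega),
      opp_cast_eq d (x+d+1) x (by omega) (by omega),
      opp_cast_eq d 0 (d+1) (by omega) (by omega),
      opp_cast_eq d (d+1) 0 (by omega) (by omega)]
    exact flip0_eq d x hd hx1 hx2

lemma ne_flip0 (d x : ℕ) (hd : 1 ≤ d) (hx1 : 1 ≤ x) (hx2 : x ≤ d) :
    PSet d x x ≠ PSet d x 0 := by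
  intro h
  exact notMemP d x x 0 (d+1) (by omega) (by omega) (by unfold P; omega)
    (h ▸ memP d x 0 0 (d+1) (by omega) (by omega) (by unfold P; omega))

lemma ne_step (d y : ℕ) (hd : 1 ≤ d) (hy1 : 1 ≤ y) (hyd : y < d) :
    PSet d y 0 ≠ PSet d (y+1) 0 := by
  intro h
  exact notMemP d y 0 0 (y+1) (by omega) (by omega) (by unfold P; omega)
    (h.symm ▸ memP d (y+1) 0 0 (y+1) (by omega) (by omega) (by unfold P; omega))

lemma walk_chain (d : ℕ) (hd : 1 ≤ d) :
    ∀ k y : ℕ, 1 ≤ y → y ≤ d → d - y ≤ k →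
      ∃ w : (flipGraph (2*d+2)).Walk (PSet d y 0) (PSet d d 0), w.length ≤ k := by
  intro k
  induction k with
  | zero =>
    intro y h1 h2 h3
    have hyd : y = d := by omega
    subst hyd
    exact ⟨SimpleGraph.Walk.nil, by simp⟩
  | succ k ih =>
    intro y h1 h2 h3
    by_cases hyd : y = d
    · subst hyd
      exact ⟨SimpleGraph.Walk.nil, by simp⟩
    · obtain ⟨w, hw⟩ := ih (y+1) (by omega) (by omega) (by omega)
      have hadj : (flipGraph (2*d+2)).Adj (PSet d y 0) (PSet d (y+1) 0) :=
        (SimpleGraph.fromRel_adj _ _ _).2 ⟨ne_step d y hd h1 (by omega),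
          Or.inl (isFlip_step d y hd h1 (by omega))⟩
      refine ⟨SimpleGraph.Walk.cons hadj w, ?_⟩
      rw [SimpleGraph.Walk.length_cons]
      omega


/-- for `1 ≤ x ≤ d`, the triangulation `U⁺` (diagonal `{x,x̄}`, the
edges `{0,v}` for `v ∈ {2,…,x} ∪ {x̄,…,2d}`, and their centrally symmetric copies) can be
transformed into the double comb `U⁻` by at most `d - x + 1` flips. -/
theorem comb_to_comb_upper_bound (d x : ℕ) (hd : 1 ≤ d) (hx1 : 1 ≤ x) (hx2 : x ≤ d) :
    (flipGraph (2 * d + 2)).Reachable (UplusSet d x) (UminusSet d) ∧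
      delta (2 * d + 2) (UplusSet d x) (UminusSet d) ≤ d - x + 1 := by
  have hU1 : UplusSet d x = PSet d x x := UplusSet_eq d x hd hx1 hx2
  have hU2 : UminusSet d = PSet d d 0 := UminusSet_eq d hd
  obtain ⟨w, hw⟩ := walk_chain d hd (d - x) x hx1 hx2 le_rfl
  have hadj : (flipGraph (2*d+2)).Adj (PSet d x x) (PSet d x 0) :=
    (SimpleGraph.fromRel_adj _ _ _).2
      ⟨ne_flip0 d x hd hx1 hx2, Or.inl (isFlip0 d x hd hx1 hx2)⟩
  rw [hU1, hU2]
  constructor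
  · exact ⟨SimpleGraph.Walk.cons hadj w⟩
  · unfold delta
    calc (flipGraph (2*d+2)).dist (PSet d x x) (PSet d d 0)
        ≤ (SimpleGraph.Walk.cons hadj w).length := SimpleGraph.dist_le _
      _ ≤ d - x + 1 := by rw [SimpleGraph.Walk.length_cons]; omega

end Cyclo
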